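/- Let g : [X]² → P_κ(X) be a function, where κ is regular uncountable and |X| ≥ κ. Then the set C_g = {x ∈ P_κ(X) : x is infinite and g({a,b}) ⊆ x for all {a,b} ∈ [x]²} is a club (closed and cofinal) in P_κ(X). Conversely, every club C in P_κ(X) contains C_g for some such g. -/

import Mathlib

open Cardinal

universe u

/-- `C` is closed in `P_κ(X)`: unions of nonempty `⊆`-chains of length `< κ` of elements
of `C` belong to `C`. -/
def ClosedIn {X : Type u} (κ : Cardinal.{u}) (C : Set (Set X)) : Prop :=
  ∀ D : Set (Set X), D ⊆ C → D.Nonempty → #D < κ → IsChain (· ⊆ ·) D → ⋃₀ D ∈ C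

/-- `C` is cofinal in `P_κ(X)`. -/
def CofinalIn {X : Type u} (κ : Cardinal.{u}) (C : Set (Set X)) : Prop :=
  ∀ x : Set X, #x < κ → ∃ y ∈ C, x ⊆ y

/-- `C` is a club in `P_κ(X)`. -/
def IsClubPk {X : Type u} (κ : Cardinal.{u}) (C : Set (Set X)) : Prop :=
  (∀ y ∈ C, #y < κ) ∧ ClosedIn κ C ∧ CofinalIn κ C

open Set

/-! ### Auxiliary definitions -/

/-- Iterative closure of a set under a pair function. -/
def iterUp {X : Type u} (g : X → X → Set X) (x0 : Set X) : ℕ → Set X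
  | 0 => x0
  | n + 1 => iterUp g x0 n ∪ ⋃ q : iterUp g x0 n × iterUp g x0 n, g q.1.1 q.2.1

/-- Recursive choice of elements of a club above each finite set, monotonically. -/
noncomputable def menasH {X : Type u} (F : Set X → Set X) : Finset X → Set X
  | e => F (↑e ∪ ⋃ e' : {e' : Finset X // e' ⊂ e}, menasH F e'.1)
termination_by e => e.card
decreasing_by exact Finset.card_lt_card e'.2

theorem menasH_eq {X : Type u} (F : Set X → Set X) (e : Finset X) :
    menasH F e = F (↑e ∪ ⋃ e' : {e' : Finset X // e' ⊂ e}, menasH F e'.1) := by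
  rw [menasH]

/-- Decoding of finite sets from single elements via a pairing equivalence. -/
def decodeF {X : Type u} [DecidableEq X] (p : X ≃ X × X) : ℕ → X → Finset X
  | 0, c => {c}
  | n + 1, c => insert (p c).2 (decodeF p n (p c).1)

/-! ### Auxiliary lemmas -/

lemma menas_sUnion_lt {X : Type u} {κ : Cardinal.{u}} (hreg : κ.IsRegular)
    {D : Set (Set X)} (hD : #D < κ) (h : ∀ d ∈ D, #d < κ) : #(⋃₀ D) < κ := by
  rw [Set.sUnion_eq_iUnion]
  exact (Cardinal.card_iUnion_lt_iff_forall_of_isRegular hreg hD).2 (fun d => h d d.2)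

lemma iterUp_mono {X : Type u} (g : X → X → Set X) (x0 : Set X) :
    Monotone (iterUp g x0) := by
  apply monotone_nat_of_le_succ
  intro n
  exact Set.subset_union_left

lemma iterUp_card {X : Type u} {κ : Cardinal.{u}} (hreg : κ.IsRegular)
    {g : X → X → Set X} (hg : ∀ a b : X, #(g a b) < κ) {x0 : Set X} (h0 : #x0 < κ) :
    ∀ n, #(iterUp g x0 n) < κ := by
  intro n
  induction n with
  | zero => exact h0
  | succ n IH =>
    show #(iterUp g x0 n ∪ ⋃ q : iterUp g x0 n × iterUp g x0 n, g q.1.1 q.2.1 : Set X) < κ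
    apply lt_of_le_of_lt (Cardinal.mk_union_le _ _)
    apply Cardinal.add_lt_of_lt hreg.aleph0_le IH
    apply lt_of_le_of_lt (Cardinal.mk_iUnion_le _)
    have hprod : #(iterUp g x0 n × iterUp g x0 n : Type u) < κ := by
      rw [Cardinal.mk_prod]
      simp only [Cardinal.lift_id]
      exact Cardinal.mul_lt_of_lt hreg.aleph0_le IH IH
    exact Cardinal.mul_lt_of_lt hreg.aleph0_le hprod
      (Cardinal.iSup_lt_of_isRegular hreg hprod (fun q => hg _ _))

lemma menas_iUnion_nat_lt {X : Type u} {κ : Cardinal.{u}} (hreg : κ.IsRegular)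
    (hunc : Cardinal.aleph0 < κ) (S : ℕ → Set X) (h : ∀ n, #(S n) < κ) :
    #(⋃ n, S n) < κ := by
  rw [← Set.sUnion_range]
  apply menas_sUnion_lt hreg
  · exact lt_of_le_of_lt
      (Cardinal.mk_le_aleph0_iff.mpr (Set.countable_range S).to_subtype) hunc
  · rintro d ⟨n, rfl⟩
    exact h n

/-- Key lemma: a chain-closed family is closed under monotone unions indexed by the
finite subsets of a set of size `< κ`. -/
lemma menas_biUnion_mem {X : Type u} {κ : Cardinal.{u}} (hreg : κ.IsRegular)
    {C : Set (Set X)} (hcl : ClosedIn κ C) (H : Finset X → Set X)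
    (hmono : ∀ e₁ e₂ : Finset X, e₁ ⊆ e₂ → H e₁ ⊆ H e₂) (μ : Cardinal.{u}) :
    ∀ s : Set X, #s ≤ μ → μ < κ → (∀ e : Finset X, ↑e ⊆ s → H e ∈ C) →
      (⋃ e ∈ {e : Finset X | ↑e ⊆ s}, H e) ∈ C := by
  induction μ using WellFoundedLT.induction with
  | _ μ IH =>
  intro s hs hμ hH
  by_cases hfin : s.Finite
  · have he : (⋃ e ∈ {e : Finset X | ↑e ⊆ s}, H e) = H hfin.toFinset := by
      apply subset_antisymm
      · refine Set.iUnion₂_subset fun e he => hmono _ _ ?_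
        intro a ha
        rw [Set.Finite.mem_toFinset]
        exact he ha
      · exact Set.subset_iUnion₂ (s := fun e _ => H e) hfin.toFinset (by simp)
    rw [he]
    exact hH _ (by simp)
  · have hs0 : aleph0 ≤ #s := aleph0_le_mk_iff.mpr (Set.infinite_coe_iff.mpr hfin)
    rcases lt_or_eq_of_le hs with hlt | heq
    · exact IH _ hlt s le_rfl (hlt.trans hμ) hH
    · subst heq
      have hT : #((#s).ord.ToType) = #s := mk_ord_toType _
      obtain ⟨φ⟩ : Nonempty ((#s).ord.ToType ≃ s) := Cardinal.eq.mp hT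
      haveI : Nonempty ((#s).ord.ToType) := by
        rw [Ordinal.toType_nonempty_iff_ne_zero]
        exact ne_of_gt (lt_of_lt_of_le Ordinal.omega0_pos
          (by rw [← Cardinal.ord_aleph0]; exact Cardinal.ord_le_ord.mpr hs0))
      haveI : NoMaxOrder ((#s).ord.ToType) := Cardinal.noMaxOrder hs0
      set u : (#s).ord.ToType → Set X := fun i => Subtype.val '' (φ '' Set.Iio i) with hu
      have hus : ∀ i, u i ⊆ s := by
        rintro i a ⟨b, _, rfl⟩
        exact b.2
      have hucard : ∀ i, #(u i) < #s := fun i =>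
        lt_of_le_of_lt (mk_image_le.trans mk_image_le) (mk_Iio_ord_toType i)
      have humono : ∀ i j, i ≤ j → u i ⊆ u j := by
        intro i j hij
        exact Set.image_mono (Set.image_mono (fun o ho => lt_of_lt_of_le ho hij))
      set c : (#s).ord.ToType → Set X := fun i => ⋃ e ∈ {e : Finset X | ↑e ⊆ u i}, H e
        with hc
      have hcC : ∀ i, c i ∈ C := fun i =>
        IH (#(u i)) (hucard i) (u i) le_rfl ((hucard i).trans hμ)
          (fun e he => hH e (he.trans (hus i)))
      have hcmono : ∀ i j, i ≤ j → c i ⊆ c j := by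
        intro i j hij
        refine Set.iUnion₂_subset fun e he => ?_
        exact Set.subset_biUnion_of_mem (u := fun e => H e)
          (show e ∈ {e : Finset X | ↑e ⊆ u j} from he.trans (humono i j hij))
      have key : ⋃₀ (Set.range c) ∈ C := by
        apply hcl
        · rintro _ ⟨i, rfl⟩; exact hcC i
        · exact ⟨c (Classical.arbitrary _), Set.mem_range_self _⟩
        · exact (Cardinal.mk_range_le.trans_eq hT).trans_lt hμ
        · rintro _ ⟨i, rfl⟩ _ ⟨j, rfl⟩ _
          rcases le_total i j with h | h
          · exact Or.inl (hcmono i j h)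
          · exact Or.inr (hcmono j i h)
      have heq2 : ⋃₀ (Set.range c) = ⋃ e ∈ {e : Finset X | ↑e ⊆ s}, H e := by
        apply subset_antisymm
        · apply Set.sUnion_subset
          rintro _ ⟨i, rfl⟩
          refine Set.iUnion₂_subset fun e he => ?_
          exact Set.subset_biUnion_of_mem (u := fun e => H e)
            (show e ∈ {e : Finset X | ↑e ⊆ s} from he.trans (hus i))
        · refine Set.iUnion₂_subset fun e he => ?_
          have : ∃ i, (↑e : Set X) ⊆ u i := by
            have hbdd : BddAbove (Set.range (fun a : e => φ.symm ⟨a.1, he a.2⟩)) :=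
              (Set.finite_range _).bddAbove
            obtain ⟨b, hb⟩ := hbdd
            obtain ⟨i, hi⟩ := exists_gt b
            refine ⟨i, fun a ha => ?_⟩
            have hle : φ.symm ⟨a, he ha⟩ < i :=
              lt_of_le_of_lt (hb (Set.mem_range_self (⟨a, ha⟩ : e))) hi
            exact ⟨φ (φ.symm ⟨a, he ha⟩), ⟨_, hle, rfl⟩, by simp⟩
          obtain ⟨i, hi⟩ := this
          refine (Set.subset_biUnion_of_mem (u := fun e => H e)
            (show e ∈ {e : Finset X | ↑e ⊆ u i} from hi)).trans ?_
          exact Set.subset_sUnion_of_mem ⟨i, rfl⟩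
      rwa [heq2] at key

lemma menasH_spec {X : Type u} {κ : Cardinal.{u}} (hreg : κ.IsRegular)
    {C : Set (Set X)} (hbd : ∀ y ∈ C, #y < κ) (F : Set X → Set X)
    (hF : ∀ s : Set X, #s < κ → F s ∈ C ∧ s ⊆ F s) (e : Finset X) :
    menasH F e ∈ C ∧ ↑e ⊆ menasH F e ∧
      ∀ e' : Finset X, e' ⊂ e → menasH F e' ⊆ menasH F e := by
  induction e using Finset.strongInductionOn with
  | _ e IH =>
  have hidx : #{e' : Finset X // e' ⊂ e} < aleph0 := by
    rw [mk_lt_aleph0_iff]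
    exact Finite.of_injective
      (fun e' => (⟨e'.1, Finset.mem_coe.mpr (Finset.mem_powerset.mpr e'.2.subset)⟩ :
        (↑e.powerset : Set (Finset X))))
      (fun a b h => Subtype.ext (by simpa using h))
  have hA : #(↑e ∪ ⋃ e' : {e' : Finset X // e' ⊂ e}, menasH F e'.1 : Set X) < κ := by
    apply lt_of_le_of_lt (Cardinal.mk_union_le _ _)
    apply Cardinal.add_lt_of_lt hreg.aleph0_le
    · exact lt_of_lt_of_le e.finite_toSet.lt_aleph0 hreg.aleph0_le
    · apply lt_of_le_of_lt (Cardinal.mk_iUnion_le _)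
      exact Cardinal.mul_lt_of_lt hreg.aleph0_le (hidx.trans_le hreg.aleph0_le)
        (Cardinal.iSup_lt_of_isRegular hreg (hidx.trans_le hreg.aleph0_le)
          (fun e' => hbd _ (IH e'.1 e'.2).1))
  refine ⟨?_, ?_, ?_⟩
  · rw [menasH_eq]; exact (hF _ hA).1
  · rw [menasH_eq]
    exact Set.subset_union_left.trans (hF _ hA).2
  · intro e' he'
    rw [menasH_eq F e]
    refine le_trans ?_ ((Set.subset_union_right).trans (hF _ hA).2)
    exact Set.subset_iUnion (fun e'' : {e'' : Finset X // e'' ⊂ e} => menasH F e''.1)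
      ⟨e', he'⟩

lemma menasH_mono {X : Type u} {κ : Cardinal.{u}} (hreg : κ.IsRegular)
    {C : Set (Set X)} (hbd : ∀ y ∈ C, #y < κ) (F : Set X → Set X)
    (hF : ∀ s : Set X, #s < κ → F s ∈ C ∧ s ⊆ F s) (e₁ e₂ : Finset X) (h : e₁ ⊆ e₂) :
    menasH F e₁ ⊆ menasH F e₂ := by
  rcases eq_or_ne e₁ e₂ with rfl | hne
  · exact subset_rfl
  · exact (menasH_spec hreg hbd F hF e₂).2.2 e₁ (Finset.ssubset_iff_subset_ne.mpr ⟨h, hne⟩)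

/-- Menas's characterization of the club filter on `P_κ(X)`: for a function
`g : [X]² → P_κ(X)`, the set `C_g` of infinite `x ∈ P_κ(X)` closed under `g` is a club in
`P_κ(X)`; conversely, every club in `P_κ(X)` contains `C_g` for some such `g`. -/
theorem stmt7 {X : Type u} (κ : Cardinal.{u}) (hreg : κ.IsRegular)
    (hunc : Cardinal.aleph0 < κ) (hX : κ ≤ #X)
    (g : X → X → Set X) (hg : ∀ a b : X, #(g a b) < κ) :
    IsClubPk κ {x : Set X | x.Infinite ∧ #x < κ ∧ ∀ a ∈ x, ∀ b ∈ x, a ≠ b → g a b ⊆ x} ∧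
      ∀ C : Set (Set X), IsClubPk κ C →
        ∃ g' : X → X → Set X, (∀ a b : X, #(g' a b) < κ) ∧
          {x : Set X | x.Infinite ∧ #x < κ ∧ ∀ a ∈ x, ∀ b ∈ x, a ≠ b → g' a b ⊆ x} ⊆ C := by
  haveI : Infinite X := Cardinal.infinite_iff.mpr (le_of_lt (lt_of_lt_of_le hunc hX))
  constructor
  · refine ⟨fun y hy => hy.2.1, ?_, ?_⟩
    · -- ClosedIn
      intro D hDsub hDne hDκ hchain
      obtain ⟨d₀, hd₀⟩ := hDne
      refine ⟨(hDsub hd₀).1.mono (Set.subset_sUnion_of_mem hd₀), ?_, ?_⟩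
      · exact menas_sUnion_lt hreg hDκ (fun d hd => (hDsub hd).2.1)
      · intro a ha b hb hne
        obtain ⟨d₁, hd₁, ha⟩ := ha
        obtain ⟨d₂, hd₂, hb⟩ := hb
        rcases eq_or_ne d₁ d₂ with rfl | hd
        · exact ((hDsub hd₁).2.2 a ha b hb hne).trans (Set.subset_sUnion_of_mem hd₁)
        · rcases hchain hd₁ hd₂ hd with h | h
          · exact ((hDsub hd₂).2.2 a (h ha) b hb hne).trans (Set.subset_sUnion_of_mem hd₂)
          · exact ((hDsub hd₁).2.2 a ha b (h hb) hne).trans (Set.subset_sUnion_of_mem hd₁)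
    · -- CofinalIn
      intro x hx
      set f := Infinite.natEmbedding X with hf
      set x0 : Set X := x ∪ Set.range f with hx0
      have h0 : #x0 < κ := by
        apply lt_of_le_of_lt (Cardinal.mk_union_le _ _)
        exact Cardinal.add_lt_of_lt hreg.aleph0_le hx
          (lt_of_le_of_lt
            (Cardinal.mk_le_aleph0_iff.mpr (Set.countable_range _).to_subtype) hunc)
      set y : Set X := ⋃ n, iterUp g x0 n with hy
      have hx0y : x0 ⊆ y := Set.subset_iUnion (iterUp g x0) 0
      refine ⟨y, ⟨?_, ?_, ?_⟩, Set.subset_union_left.trans hx0y⟩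
      · exact (Set.infinite_range_of_injective f.injective).mono
          (Set.subset_union_right.trans hx0y)
      · exact menas_iUnion_nat_lt hreg hunc _ (iterUp_card hreg hg h0)
      · intro a ha b hb hne
        rw [hy, Set.mem_iUnion] at ha hb
        obtain ⟨m, ha⟩ := ha
        obtain ⟨n, hb⟩ := hb
        have ham : a ∈ iterUp g x0 (max m n) := iterUp_mono g x0 (le_max_left m n) ha
        have hbn : b ∈ iterUp g x0 (max m n) := iterUp_mono g x0 (le_max_right m n) hb
        refine subset_trans ?_ (Set.subset_iUnion (iterUp g x0) (max m n + 1))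
        show g a b ⊆ iterUp g x0 (max m n) ∪
          ⋃ q : iterUp g x0 (max m n) × iterUp g x0 (max m n), g q.1.1 q.2.1
        refine subset_trans ?_ Set.subset_union_right
        exact Set.subset_iUnion
          (fun q : iterUp g x0 (max m n) × iterUp g x0 (max m n) => g q.1.1 q.2.1)
          (⟨a, ham⟩, ⟨b, hbn⟩)
  · intro C hC
    obtain ⟨hbd, hcl, hcof⟩ := hC
    classical
    obtain ⟨p⟩ : Nonempty (X ≃ X × X) := by
      refine Cardinal.eq.mp ?_
      simp only [Cardinal.mk_prod, Cardinal.lift_id]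
      exact (Cardinal.mul_eq_self (Cardinal.aleph0_le_mk X)).symm
    have hFex : ∀ s : Set X, ∃ y : Set X, #s < κ → y ∈ C ∧ s ⊆ y := by
      intro s
      by_cases h : #s < κ
      · obtain ⟨y, hy, hsy⟩ := hcof s h
        exact ⟨y, fun _ => ⟨hy, hsy⟩⟩
      · exact ⟨∅, fun hh => absurd hh h⟩
    choose F hF using hFex
    have hF' : ∀ s : Set X, #s < κ → F s ∈ C ∧ s ⊆ F s := hF
    set g' : X → X → Set X := fun a b =>
      insert (p.symm (a, b)) (⋃ n : ℕ, menasH F (decodeF p n a)) with hg'def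
    have hHC : ∀ e : Finset X, menasH F e ∈ C := fun e => (menasH_spec hreg hbd F hF' e).1
    refine ⟨g', ?_, ?_⟩
    · intro a b
      apply lt_of_le_of_lt Cardinal.mk_insert_le
      apply Cardinal.add_lt_of_lt hreg.aleph0_le
      · exact menas_iUnion_nat_lt hreg hunc _ (fun n => hbd _ (hHC _))
      · exact lt_of_lt_of_le Cardinal.one_lt_aleph0 hreg.aleph0_le
    · rintro x ⟨hxinf, hxκ, hxcl⟩
      have claim1 : ∀ a ∈ x, ∀ b ∈ x, a ≠ b → p.symm (a, b) ∈ x := by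
        intro a ha b hb hab
        exact hxcl a ha b hb hab (Set.mem_insert _ _)
      have claim2 : ∀ a ∈ x, ∀ n : ℕ, menasH F (decodeF p n a) ⊆ x := by
        intro a ha n
        obtain ⟨b, hb, hba⟩ := hxinf.exists_notMem_finite (Set.finite_singleton a)
        have hab : a ≠ b := fun h => hba (h ▸ rfl)
        have hsub : g' a b ⊆ x := hxcl a ha b hb hab
        exact (Set.subset_iUnion (fun n => menasH F (decodeF p n a)) n).trans
          ((Set.subset_insert _ _).trans hsub)
      have claim3 : ∀ e : Finset X, ↑e ⊆ x →
          {a | a ∈ x ∧ ∃ n : ℕ, e ⊆ decodeF p n a}.Infinite := by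
        intro e
        induction e using Finset.induction_on with
        | empty => exact fun _ => hxinf.mono (fun a ha => ⟨ha, 0, Finset.empty_subset _⟩)
        | insert b e' hb IH =>
          intro hsub
          have hbx : b ∈ x := hsub (by simp)
          have he'x : ↑e' ⊆ x := (Finset.coe_subset.mpr (Finset.subset_insert _ _)).trans hsub
          have hS := IH he'x
          have himg : ((fun t => p.symm (t, b)) ''
              ({a | a ∈ x ∧ ∃ n : ℕ, e' ⊆ decodeF p n a} \ {b})).Infinite := by
            apply Set.Infinite.image ?_ (hS.diff (Set.finite_singleton b))
            intro t1 _ t2 _ h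
            exact (Prod.ext_iff.mp (p.symm.injective h)).1
          refine himg.mono ?_
          rintro _ ⟨t, ⟨⟨htx, n, hdec⟩, htb⟩, rfl⟩
          refine ⟨claim1 t htx b hbx (by simpa using htb), n + 1, ?_⟩
          have hde : decodeF p (n + 1) (p.symm (t, b)) = insert b (decodeF p n t) := by
            show insert (p (p.symm (t, b))).2 (decodeF p n (p (p.symm (t, b))).1) = _
            rw [Equiv.apply_symm_apply]
          rw [hde]
          exact Finset.insert_subset_insert _ hdec
      have claim4 : ∀ e : Finset X, ↑e ⊆ x → menasH F e ⊆ x := by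
        intro e he
        obtain ⟨a, hax, n, hdec⟩ := (claim3 e he).nonempty
        exact (menasH_mono hreg hbd F hF' e _ hdec).trans (claim2 a hax n)
      have hxeq : x = ⋃ e ∈ {e : Finset X | ↑e ⊆ x}, menasH F e := by
        apply subset_antisymm
        · intro a ha
          refine Set.mem_biUnion
            (show ({a} : Finset X) ∈ {e : Finset X | ↑e ⊆ x} from by simpa using ha) ?_
          exact (menasH_spec hreg hbd F hF' {a}).2.1 (by simp)
        · exact Set.iUnion₂_subset claim4
      have hmem := menas_biUnion_mem hreg hcl (menasH F) (menasH_mono hreg hbd F hF')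
        (#x) x le_rfl hxκ (fun e _ => hHC e)
      rwa [← hxeq] at hmem
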